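/- On the hexagonal lattice: every configuration σ ∈ X has at least 3L − H(σ) bridges. Moreover, if σ has exactly 3L − H(σ) bridges, then every strip is either a bridge or a semibridge of σ. -/

import Mathlib

open scoped Classical BigOperators

namespace IsingHex

/-- Sites of the hexagonal lattice of side length `L` with periodic boundary conditions,
identified with the `2L²` triangular faces of the dual triangular lattice `Λ*`:
`(p, false)` is the up-triangle and `(p, true)` the down-triangle in the rhombic cell `p`. -/
abbrev Site (L : ℕ) : Type := (ZMod L × ZMod L) × Bool

/-- Spin configurations `X = Ω^Λ` with spin set `Ω = Fin q`. -/
abbrev Conf (L q : ℕ) : Type := Site L → Fin q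

/-- Adjacency of the hexagonal lattice: the up-triangle `(p, false)` is adjacent to the
down-triangles `(p, true)`, `(p - (1,0), true)` and `(p - (0,1), true)`. -/
def hexAdj {L : ℕ} (v w : Site L) : Prop :=
  (v.2 = false ∧ w.2 = true ∧
     (w.1 = v.1 ∨ w.1 = (v.1.1 - 1, v.1.2) ∨ w.1 = (v.1.1, v.1.2 - 1))) ∨
  (v.2 = true ∧ w.2 = false ∧
     (v.1 = w.1 ∨ v.1 = (w.1.1 - 1, w.1.2) ∨ v.1 = (w.1.1, w.1.2 - 1)))

/-- The Hamiltonian `H(σ)`: the number of edges of `Λ` whose endpoints carry different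
spins; each edge is counted exactly once through its unique up-triangle endpoint. -/
noncomputable def Ham (L q : ℕ) (σ : Conf L q) : ℕ :=
  Nat.card {e : Site L × Site L // e.1.2 = false ∧ hexAdj e.1 e.2 ∧ σ e.1 ≠ σ e.2}

/-- The monochromatic ground state `𝐚`. -/
def groundConf (L q : ℕ) (a : Fin q) : Conf L q := fun _ => a

/-- The set `S = {𝟏, …, 𝐪}` of ground states. -/
def groundSet (L q : ℕ) : Set (Conf L q) := {σ | ∃ a : Fin q, σ = groundConf L q a}

/-- Partition function `Z_β`. -/
noncomputable def Zfun (L q : ℕ) (β : ℝ) : ℝ :=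
  ∑' σ : Conf L q, Real.exp (-β * (Ham L q σ : ℝ))

/-- Gibbs measure of a set of configurations. -/
noncomputable def gibbsP (L q : ℕ) (β : ℝ) (A : Set (Conf L q)) : ℝ :=
  (∑' σ : Conf L q, A.indicator (fun ζ => Real.exp (-β * (Ham L q ζ : ℝ))) σ) / Zfun L q β

/-- `σ ∼ ζ`: the two configurations differ at exactly one site. -/
def oneFlip {L q : ℕ} (σ ζ : Conf L q) : Prop :=
  ∃ x : Site L, σ x ≠ ζ x ∧ ∀ y : Site L, y ≠ x → σ y = ζ y

/-- Metropolis jump rates `c_β(σ, ζ)`. -/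
noncomputable def rate (L q : ℕ) (β : ℝ) (σ ζ : Conf L q) : ℝ :=
  if oneFlip σ ζ then Real.exp (-β * max ((Ham L q ζ : ℝ) - (Ham L q σ : ℝ)) 0) else 0

/-- There is a `t`-path of single spin flips connecting `σ` and `ζ`. -/
def ConnBelow (L q : ℕ) (t : ℕ) (σ ζ : Conf L q) : Prop :=
  ∃ (N : ℕ) (ω : ℕ → Conf L q), ω 0 = σ ∧ ω N = ζ ∧
    (∀ n < N, oneFlip (ω n) (ω (n + 1))) ∧ ∀ n ≤ N, Ham L q (ω n) ≤ t

/-- Communication height `Φ(σ, ζ)`. -/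
noncomputable def commHeight (L q : ℕ) (σ ζ : Conf L q) : ℕ :=
  sInf {t : ℕ | ConnBelow L q t σ ζ}

/-- The strip of index `ℓ` in direction `d` (`0` = horizontal, `1` = vertical,
`2` = diagonal): `2L` consecutive triangles winding around the torus. -/
def stripSet (L : ℕ) (d : Fin 3) (ℓ : ZMod L) : Set (Site L) :=
  if d = 0 then {v | v.1.2 = ℓ}
  else if d = 1 then {v | v.1.1 = ℓ}
  else {v | (v.2 = false ∧ v.1.1 + v.1.2 = ℓ) ∨ (v.2 = true ∧ v.1.1 + v.1.2 = ℓ - 1)}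

/-- Strip energy `ΔH_s(σ)`: number of adjacent pairs inside the strip with different spins. -/
noncomputable def stripEnergy (L q : ℕ) (σ : Conf L q) (d : Fin 3) (ℓ : ZMod L) : ℕ :=
  Nat.card {e : Site L × Site L //
    e.1.2 = false ∧ e.1 ∈ stripSet L d ℓ ∧ e.2 ∈ stripSet L d ℓ ∧
      hexAdj e.1 e.2 ∧ σ e.1 ≠ σ e.2}

/-- The strip `(d, ℓ)` is an `a`-bridge of `σ`. -/
def IsBridgeWith (L q : ℕ) (σ : Conf L q) (d : Fin 3) (ℓ : ZMod L) (a : Fin q) : Prop :=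
  ∀ v ∈ stripSet L d ℓ, σ v = a

/-- The strip `(d, ℓ)` is a bridge of `σ`. -/
def IsBridge (L q : ℕ) (σ : Conf L q) (d : Fin 3) (ℓ : ZMod L) : Prop :=
  ∃ a : Fin q, IsBridgeWith L q σ d ℓ a

/-- Cyclic enumeration of the strip `(d, ℓ)` by `ZMod (2L)`, consecutive triangles
being adjacent. -/
def stripCycle (L : ℕ) (d : Fin 3) (ℓ : ZMod L) (k : ZMod (2 * L)) : Site L :=
  let t : ZMod L := ((k.val / 2 : ℕ) : ZMod L)
  if d = 0 then ((t, ℓ), decide (k.val % 2 = 1))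
  else if d = 1 then ((ℓ, t), decide (k.val % 2 = 1))
  else if k.val % 2 = 1 then ((t, ℓ - 1 - t), true) else ((t, ℓ - t), false)

/-- A set of triangles is an arc (a set of consecutive triangles) of the strip `(d, ℓ)`. -/
def IsArc (L : ℕ) (d : Fin 3) (ℓ : ZMod L) (S : Set (Site L)) : Prop :=
  ∃ (s : ZMod (2 * L)) (m : ℕ),
    S = (fun k : ℕ => stripCycle L d ℓ (s + (k : ZMod (2 * L)))) '' Set.Iio m

/-- The strip `(d, ℓ)` is an `{a,b}`-semibridge of `σ`: it carries exactly the two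
spins `a ≠ b`, and the sites carrying each spin are consecutive in the strip. -/
def IsSemibridgePair (L q : ℕ) (σ : Conf L q) (d : Fin 3) (ℓ : ZMod L) (a b : Fin q) : Prop :=
  a ≠ b ∧ (∀ v ∈ stripSet L d ℓ, σ v = a ∨ σ v = b) ∧
    (∃ v ∈ stripSet L d ℓ, σ v = a) ∧ (∃ v ∈ stripSet L d ℓ, σ v = b) ∧
    IsArc L d ℓ {v ∈ stripSet L d ℓ | σ v = a} ∧ IsArc L d ℓ {v ∈ stripSet L d ℓ | σ v = b}

/-- The strip `(d, ℓ)` is a semibridge of `σ`. -/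
def IsSemibridge (L q : ℕ) (σ : Conf L q) (d : Fin 3) (ℓ : ZMod L) : Prop :=
  ∃ a b : Fin q, IsSemibridgePair L q σ d ℓ a b

/-- `σ` has an `a`-cross: two `a`-bridges in different directions. -/
def HasCross (L q : ℕ) (σ : Conf L q) (a : Fin q) : Prop :=
  ∃ (d d' : Fin 3) (ℓ ℓ' : ZMod L),
    d ≠ d' ∧ IsBridgeWith L q σ d ℓ a ∧ IsBridgeWith L q σ d' ℓ' a

/-- `σ` is cross-free. -/
def CrossFree (L q : ℕ) (σ : Conf L q) : Prop := ∀ a : Fin q, ¬ HasCross L q σ a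

/-- Connected subsets of the torus `𝕋_L` of strip indices (the collection `𝔖_L`). -/
def CircConn (L : ℕ) (P : Set (ZMod L)) : Prop :=
  ∀ x ∈ P, ∀ y ∈ P, ∃ (N : ℕ) (γ : ℕ → ZMod L), γ 0 = x ∧ γ N = y ∧
    (∀ n ≤ N, γ n ∈ P) ∧ ∀ n < N, γ (n + 1) = γ n + 1 ∨ γ (n + 1) = γ n - 1

/-- Union of the strips with indices in `P`, in direction `d`. -/
def stripUnion (L : ℕ) (d : Fin 3) (P : Set (ZMod L)) : Set (Site L) :=
  ⋃ ℓ ∈ P, stripSet L d ℓ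

/-- The configuration `ξ^{a,b}_U`: spin `b` on `U` and spin `a` elsewhere. -/
noncomputable def xiConf (L q : ℕ) (a b : Fin q) (U : Set (Site L)) : Conf L q :=
  fun v => if v ∈ U then b else a

/-- `σ ∈ R_n^{a,b}`: a regular configuration between `𝐚` and `𝐛` built from `n` strips. -/
def IsRegular (L q : ℕ) (σ : Conf L q) (a b : Fin q) (n : ℕ) : Prop :=
  ∃ (d : Fin 3) (P : Set (ZMod L)), CircConn L P ∧ P.ncard = n ∧
    σ = xiConf L q a b (stripUnion L d P)

/-- The vertices (in the triangular lattice) of the triangle `v`. -/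
def triVerts (L : ℕ) (v : Site L) : Set (ZMod L × ZMod L) :=
  if v.2 = false then {v.1, (v.1.1 + 1, v.1.2), (v.1.1, v.1.2 + 1)}
  else {(v.1.1 + 1, v.1.2), (v.1.1, v.1.2 + 1), (v.1.1 + 1, v.1.2 + 1)}

/-- A connected set of triangles (connected through shared sides). -/
def ConnSet (L : ℕ) (U : Set (Site L)) : Prop :=
  ∀ x ∈ U, ∀ y ∈ U, ∃ (N : ℕ) (γ : ℕ → Site L), γ 0 = x ∧ γ N = y ∧
    (∀ n ≤ N, γ n ∈ U) ∧ ∀ n < N, hexAdj (γ n) (γ (n + 1))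

/-- A one-dimensional canonical set inside the strip `(d, ℓ)`. -/
def OneDimCanonical (L : ℕ) (d : Fin 3) (ℓ : ZMod L) (U : Set (Site L)) : Prop :=
  U ⊆ stripSet L d ℓ ∧ U.Nonempty ∧ U ≠ stripSet L d ℓ ∧
  (ConnSet L U ∨
    (Even U.ncard ∧ ∃ (U₁ : Set (Site L)) (y : Site L),
      U = U₁ ∪ {y} ∧ y ∉ U₁ ∧ U₁.Nonempty ∧ ConnSet L U₁ ∧
      (∀ x ∈ U₁, ¬ hexAdj x y) ∧ ∃ x ∈ U₁, (triVerts L x ∩ triVerts L y).Nonempty))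

/-- `P ≺ P'`: connected index sets with `P ⊆ P'` and `|P'| = |P| + 1`. -/
def StepPair (L : ℕ) (P P' : Set (ZMod L)) : Prop :=
  CircConn L P ∧ CircConn L P' ∧ P ⊆ P' ∧ P'.ncard = P.ncard + 1

/-- A protuberance attached to `s(P)` inside the strip `(d, ℓ)`: a one-dimensional
canonical set such that, when `1 ≤ |P| ≤ L-2`, at least half of its triangles share a
side with `s(P)`. -/
def IsProtuberance (L : ℕ) (d : Fin 3) (P : Set (ZMod L)) (ℓ : ZMod L)
    (U : Set (Site L)) : Prop :=
  OneDimCanonical L d ℓ U ∧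
    (1 ≤ P.ncard → P.ncard ≤ L - 2 →
      U.ncard ≤ 2 * {x ∈ U | ∃ y ∈ stripUnion L d P, hexAdj x y}.ncard)

/-- `‖σ‖_a`: the number of sites with spin `a`. -/
noncomputable def spinCount (L q : ℕ) (σ : Conf L q) (a : Fin q) : ℕ :=
  Nat.card {x : Site L // σ x = a}

/-- `N̂(S)`: configurations connected to a ground state by a `(2L+2)`-path. -/
def NHatGround (L q : ℕ) : Set (Conf L q) :=
  {ζ | ∃ a : Fin q, ConnBelow L q (2 * L + 2) (groundConf L q a) ζ}

/-- A nice pair of configurations (relative to the partition class `A`). -/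
def NicePair (L q : ℕ) (A : Finset (Fin q)) (σ ζ : Conf L q) : Prop :=
  σ ∉ NHatGround L q ∧ ζ ∉ NHatGround L q ∧ oneFlip σ ζ ∧
    (∑ a ∈ A, spinCount L q σ a) = L ^ 2 ∧ (∑ a ∈ A, spinCount L q ζ a) = L ^ 2 - 1

/-- `u` is the vector of mean hitting times `σ ↦ E_σ[τ_A]` of the Metropolis dynamics:
it vanishes on `A` and satisfies the first-step (harmonicity) equations off `A`. -/
def IsMeanHittingTime (L q : ℕ) (β : ℝ) (A : Set (Conf L q)) (u : Conf L q → ℝ) : Prop :=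
  (∀ σ ∈ A, u σ = 0) ∧
    ∀ σ ∉ A, (∑' ζ : Conf L q, rate L q β σ ζ) * u σ =
      1 + ∑' ζ : Conf L q, rate L q β σ ζ * u ζ

/-- Gibbs weight `μ_β(σ)`. -/
noncomputable def gibbsWeight (L q : ℕ) (β : ℝ) (σ : Conf L q) : ℝ :=
  Real.exp (-β * (Ham L q σ : ℝ)) / Zfun L q β

/-- The Dirichlet form `D_β(f)`. -/
noncomputable def dirichletForm (L q : ℕ) (β : ℝ) (f : Conf L q → ℝ) : ℝ :=
  (1 / 2) * ∑' p : Conf L q × Conf L q,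
    gibbsWeight L q β p.1 * rate L q β p.1 p.2 * (f p.2 - f p.1) ^ 2

/-- `h` is the equilibrium potential `h^β_{A,B}(σ) = P_σ[τ_A < τ_B]`: it equals `1` on
`A`, `0` on `B`, and is harmonic for the Metropolis dynamics off `A ∪ B`. -/
def IsEqPotential (L q : ℕ) (β : ℝ) (A B : Set (Conf L q)) (h : Conf L q → ℝ) : Prop :=
  (∀ σ ∈ A, h σ = 1) ∧ (∀ σ ∈ B, h σ = 0) ∧
    ∀ σ, σ ∉ A → σ ∉ B → (∑' ζ : Conf L q, rate L q β σ ζ * (h σ - h ζ)) = 0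


section CycleAux
set_option linter.unusedSectionVars false
variable {n : ℕ} [NeZero n] {α : Type*} [DecidableEq α]

lemma cyc_add_nat (f : ZMod n → α) (h : ∀ k, f (k + 1) = f k) (k : ZMod n) :
    ∀ j : ℕ, f (k + (j : ZMod n)) = f k := by
  intro j
  induction j with
  | zero => simp
  | succ j ih =>
      have e : ((j + 1 : ℕ) : ZMod n) = (j : ZMod n) + 1 := by push_cast; ring
      rw [e, ← add_assoc, h]; exact ih

lemma cyc_const (f : ZMod n → α) (h : ∀ k, f (k + 1) = f k) (k k' : ZMod n) :
    f k = f k' := by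
  have := cyc_add_nat f h k' (k - k').val
  rw [ZMod.natCast_val, ZMod.cast_id] at this
  have e : k' + (k - k') = k := by ring
  rw [e] at this
  exact this

lemma cyc_no_single_change (f : ZMod n → α) (k : ZMod n) (hk : f (k + 1) ≠ f k)
    (h : ∀ k', k' ≠ k → f (k' + 1) = f k') : False := by
  have hn : 1 ≤ n := NeZero.one_le
  have key : ∀ j : ℕ, j ≤ n - 1 → f (k + 1 + (j : ZMod n)) = f (k + 1) := by
    intro j hj
    induction j with
    | zero => simp
    | succ j ih =>
        have hne : k + 1 + (j : ZMod n) ≠ k := by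
          intro he
          have h0 : ((1 + j : ℕ) : ZMod n) = 0 := by
            push_cast
            linear_combination he
          rw [ZMod.natCast_eq_zero_iff] at h0
          have := Nat.le_of_dvd (by omega) h0
          omega
        have e : ((j + 1 : ℕ) : ZMod n) = (j : ZMod n) + 1 := by push_cast; ring
        rw [e, ← add_assoc, h _ hne]
        exact ih (by omega)
  have hfin := key (n - 1) le_rfl
  have e : k + 1 + ((n - 1 : ℕ) : ZMod n) = k := by
    have h1 : ((n - 1 : ℕ) : ZMod n) = -1 := by
      have h2 : ((n - 1 : ℕ) : ZMod n) + 1 = ((n : ℕ) : ZMod n) := by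
        rw [← Nat.cast_add_one]
        congr 1
        omega
      rw [ZMod.natCast_self] at h2
      linear_combination h2
    rw [h1]; ring
  rw [e] at hfin
  exact hk hfin.symm

lemma two_le_changes (f : ZMod n → α) (h : ∃ k k', f k ≠ f k') :
    2 ≤ (Finset.univ.filter fun k : ZMod n => f (k + 1) ≠ f k).card := by
  obtain ⟨k0, hk0⟩ : ∃ k, f (k + 1) ≠ f k := by
    by_contra hc
    push_neg at hc
    obtain ⟨k, k', hkk⟩ := h
    exact hkk (cyc_const f hc k k')
  have h1 : 1 < (Finset.univ.filter fun k : ZMod n => f (k + 1) ≠ f k).card := by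
    rw [Finset.one_lt_card]
    by_contra hc
    push_neg at hc
    refine cyc_no_single_change f k0 hk0 (fun k' hne => ?_)
    by_contra hk'
    exact hne (hc k' (by simp [hk']) k0 (by simp [hk0]))
  omega

lemma changes_eq_two (f : ZMod n → α)
    (h2 : (Finset.univ.filter fun k : ZMod n => f (k + 1) ≠ f k).card = 2) :
    ∃ (a b : α) (s : ZMod n) (m : ℕ), a ≠ b ∧ 0 < m ∧ m < n ∧
      (∀ k, f k = a ∨ f k = b) ∧
      {k : ZMod n | f k = a} = (fun j : ℕ => s + (j : ZMod n)) '' Set.Iio m ∧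
      {k : ZMod n | f k = b} = (fun j : ℕ => s + (m : ZMod n) + (j : ZMod n)) '' Set.Iio (n - m) := by
  obtain ⟨k1, k2, hne, hC⟩ := Finset.card_eq_two.mp h2
  have hmem : ∀ k : ZMod n, f (k + 1) ≠ f k ↔ (k = k1 ∨ k = k2) := by
    intro k
    rw [show (k = k1 ∨ k = k2) ↔ k ∈ ({k1, k2} : Finset (ZMod n)) by simp, ← hC]
    simp
  set s : ZMod n := k1 + 1 with hs
  set m : ℕ := (k2 - k1).val with hm
  set a : α := f s with ha
  set b : α := f (k2 + 1) with hb
  have hm0 : 0 < m := by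
    rw [hm, ZMod.val_pos]
    exact sub_ne_zero.mpr hne.symm
  have hmn : m < n := ZMod.val_lt _
  have hk2 : k2 = k1 + (m : ZMod n) := by
    rw [hm, ZMod.natCast_val, ZMod.cast_id]; ring
  have hcast : ∀ j : ℕ, ((j + 1 : ℕ) : ZMod n) = (j : ZMod n) + 1 := by
    intro j; push_cast; ring
  have hnatinj : ∀ x y : ℕ, x < n → y < n → ((x : ZMod n) = (y : ZMod n)) → x = y := by
    intro x y hx hy hxy
    rw [ZMod.natCast_eq_natCast_iff] at hxy
    have h' : x % n = y % n := hxy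
    rwa [Nat.mod_eq_of_lt hx, Nat.mod_eq_of_lt hy] at h'
  have claim1 : ∀ j : ℕ, j < m → f (s + (j : ZMod n)) = a := by
    intro j hj
    induction j with
    | zero => simp [ha]
    | succ j ih =>
        have hstep : f (s + (j : ZMod n) + 1) = f (s + (j : ZMod n)) := by
          by_contra hd
          rcases (hmem _).mp hd with h | h
          · have h0 : ((1 + j : ℕ) : ZMod n) = ((0 : ℕ) : ZMod n) := by
              push_cast
              linear_combination h
            have := hnatinj _ _ (by omega) (by omega) h0
            omega
          · rw [hk2] at h
            have h0 : ((1 + j : ℕ) : ZMod n) = ((m : ℕ) : ZMod n) := by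
              push_cast
              linear_combination h
            have := hnatinj _ _ (by omega) (by omega) h0
            omega
        rw [hcast, ← add_assoc, hstep]
        exact ih (by omega)
  have hsm : s + (m : ZMod n) = k2 + 1 := by rw [hk2]; ring
  have claim2 : ∀ j : ℕ, j < n - m → f (k2 + 1 + (j : ZMod n)) = b := by
    intro j hj
    induction j with
    | zero => simp [hb]
    | succ j ih =>
        have hstep : f (k2 + 1 + (j : ZMod n) + 1) = f (k2 + 1 + (j : ZMod n)) := by
          by_contra hd
          rcases (hmem _).mp hd with h | h
          · rw [hk2] at h
            have h0 : ((m + 1 + j : ℕ) : ZMod n) = ((0 : ℕ) : ZMod n) := by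
              push_cast
              linear_combination h
            have := hnatinj _ _ (by omega) (by omega) h0
            omega
          · have h0 : ((1 + j : ℕ) : ZMod n) = ((0 : ℕ) : ZMod n) := by
              push_cast
              linear_combination h
            have := hnatinj _ _ (by omega) (by omega) h0
            omega
        rw [hcast, ← add_assoc, hstep]
        exact ih (by omega)
  have hba : b ≠ a := by
    have hk2a : f k2 = a := by
      have e : k2 = s + ((m - 1 : ℕ) : ZMod n) := by
        rw [hk2, hs]
        have h3 : ((m - 1 : ℕ) : ZMod n) + 1 = (m : ZMod n) := by
          rw [← Nat.cast_add_one]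
          congr 1
          omega
        linear_combination -h3
      rw [e]
      exact claim1 _ (by omega)
    have h4 := (hmem k2).mpr (Or.inr rfl)
    rw [hk2a] at h4
    exact h4
  have cover : ∀ k : ZMod n,
      (∃ j : ℕ, j < m ∧ k = s + (j : ZMod n)) ∨
      (∃ j : ℕ, j < n - m ∧ k = s + (m : ZMod n) + (j : ZMod n)) := by
    intro k
    set j : ℕ := (k - s).val with hj
    have hjn : j < n := ZMod.val_lt _
    have hk : k = s + (j : ZMod n) := by
      rw [hj, ZMod.natCast_val, ZMod.cast_id]; ring
    by_cases hjm : j < m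
    · exact Or.inl ⟨j, hjm, hk⟩
    · refine Or.inr ⟨j - m, by omega, ?_⟩
      rw [hk]
      have h5 : ((m : ℕ) : ZMod n) + ((j - m : ℕ) : ZMod n) = (j : ZMod n) := by
        rw [← Nat.cast_add]
        congr 1
        omega
      linear_combination -h5
  refine ⟨a, b, s, m, hba.symm, hm0, hmn, ?_, ?_, ?_⟩
  · intro k
    rcases cover k with ⟨j, hj, rfl⟩ | ⟨j, hj, rfl⟩
    · exact Or.inl (claim1 j hj)
    · rw [hsm]; exact Or.inr (claim2 j hj)
  · ext k
    simp only [Set.mem_setOf_eq, Set.mem_image, Set.mem_Iio]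
    constructor
    · intro hk
      rcases cover k with ⟨j, hj, rfl⟩ | ⟨j, hj, rfl⟩
      · exact ⟨j, hj, rfl⟩
      · exfalso
        rw [hsm] at hk
        exact hba ((claim2 j hj).symm.trans hk)
    · rintro ⟨j, hj, rfl⟩
      exact claim1 j hj
  · ext k
    simp only [Set.mem_setOf_eq, Set.mem_image, Set.mem_Iio]
    constructor
    · intro hk
      rcases cover k with ⟨j, hj, rfl⟩ | ⟨j, hj, rfl⟩
      · exact absurd ((claim1 j hj).symm.trans hk) (Ne.symm hba)
      · exact ⟨j, hj, rfl⟩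
    · rintro ⟨j, hj, rfl⟩
      rw [hsm]
      exact claim2 j hj

end CycleAux

section StripAux
set_option linter.unusedSectionVars false

/-- Auxiliary: coordinates on a strip. -/
structure StripCoord (L : ℕ) (d : Fin 3) (ℓ : ZMod L) where
  coord : ZMod L → Bool → Site L
  cyc_eq : ∀ k : ZMod (2 * L),
    stripCycle L d ℓ k = coord ((k.val / 2 : ℕ) : ZMod L) (decide (k.val % 2 = 1))
  inj : ∀ {t b t' b'}, coord t b = coord t' b' → t = t' ∧ b = b'
  mem : ∀ t b, coord t b ∈ stripSet L d ℓ
  surj : ∀ v ∈ stripSet L d ℓ, ∃ t b, v = coord t b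
  snd_eq : ∀ t b, (coord t b).2 = b
  adj0 : ∀ t, hexAdj (coord t false) (coord t true)
  adj1 : ∀ t, hexAdj (coord (t + 1) false) (coord t true)
  classify : ∀ t u, hexAdj (coord t false) (coord u true) → u = t ∨ t = u + 1

variable {L : ℕ}

lemma one_ne_zero_zmod (hL : 8 ≤ L) : (1 : ZMod L) ≠ 0 := by
  haveI : NeZero L := ⟨by omega⟩
  intro h
  have h0 : ((1 : ℕ) : ZMod L) = 0 := by exact_mod_cast h
  rw [ZMod.natCast_eq_zero_iff] at h0
  have := Nat.le_of_dvd (by omega) h0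
  omega

lemma mem_stripSet0 (ℓ : ZMod L) (v : Site L) : v ∈ stripSet L 0 ℓ ↔ v.1.2 = ℓ := by
  simp [stripSet]

lemma mem_stripSet1 (ℓ : ZMod L) (v : Site L) : v ∈ stripSet L 1 ℓ ↔ v.1.1 = ℓ := by
  simp [stripSet]

lemma mem_stripSet2 (ℓ : ZMod L) (v : Site L) : v ∈ stripSet L 2 ℓ ↔
    ((v.2 = false ∧ v.1.1 + v.1.2 = ℓ) ∨ (v.2 = true ∧ v.1.1 + v.1.2 = ℓ - 1)) := by
  rw [stripSet, if_neg (by decide : ¬((2 : Fin 3) = 0)), if_neg (by decide : ¬((2 : Fin 3) = 1))]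
  rfl

def stripCoord0 (hL : 8 ≤ L) (ℓ : ZMod L) : StripCoord L 0 ℓ where
  coord t b := ((t, ℓ), b)
  cyc_eq k := by simp [stripCycle]
  inj := by
    intro t b t' b' h
    simp only [Prod.mk.injEq] at h
    exact ⟨h.1.1, h.2⟩
  mem t b := by rw [mem_stripSet0]
  surj v hv := by
    rw [mem_stripSet0] at hv
    exact ⟨v.1.1, v.2, by rw [← hv]⟩
  snd_eq t b := rfl
  adj0 t := Or.inl ⟨rfl, rfl, Or.inl rfl⟩
  adj1 t := Or.inl ⟨rfl, rfl, Or.inr (Or.inl (by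
    show ((t : ZMod L), ℓ) = (t + 1 - 1, ℓ)
    rw [Prod.mk.injEq]
    exact ⟨by ring, rfl⟩))⟩
  classify t u h := by
    rcases h with ⟨-, -, h | h | h⟩ | ⟨hv, -, -⟩
    · simp only [Prod.mk.injEq] at h
      exact Or.inl h.1
    · simp only [Prod.mk.injEq] at h
      refine Or.inr ?_
      rw [h.1]; ring
    · simp only [Prod.mk.injEq] at h
      exact absurd (by linear_combination h.2 : (1 : ZMod L) = 0) (one_ne_zero_zmod hL)
    · simp at hv

def stripCoord1 (hL : 8 ≤ L) (ℓ : ZMod L) : StripCoord L 1 ℓ where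
  coord t b := ((ℓ, t), b)
  cyc_eq k := by simp [stripCycle]
  inj := by
    intro t b t' b' h
    simp only [Prod.mk.injEq] at h
    exact ⟨h.1.2, h.2⟩
  mem t b := by rw [mem_stripSet1]
  surj v hv := by
    rw [mem_stripSet1] at hv
    exact ⟨v.1.2, v.2, by rw [← hv]⟩
  snd_eq t b := rfl
  adj0 t := Or.inl ⟨rfl, rfl, Or.inl rfl⟩
  adj1 t := Or.inl ⟨rfl, rfl, Or.inr (Or.inr (by
    show ((ℓ : ZMod L), (t : ZMod L)) = (ℓ, t + 1 - 1)
    rw [Prod.mk.injEq]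
    exact ⟨rfl, by ring⟩))⟩
  classify t u h := by
    rcases h with ⟨-, -, h | h | h⟩ | ⟨hv, -, -⟩
    · simp only [Prod.mk.injEq] at h
      exact Or.inl h.2
    · simp only [Prod.mk.injEq] at h
      exact absurd (by linear_combination h.1 : (1 : ZMod L) = 0) (one_ne_zero_zmod hL)
    · simp only [Prod.mk.injEq] at h
      refine Or.inr ?_
      rw [h.2]; ring
    · simp at hv

def stripCoord2 (hL : 8 ≤ L) (ℓ : ZMod L) : StripCoord L 2 ℓ where
  coord t b := ((t, cond b (ℓ - 1 - t) (ℓ - t)), b)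
  cyc_eq k := by
    by_cases h : k.val % 2 = 1 <;> simp [stripCycle, h]
  inj := by
    intro t b t' b' h
    simp only [Prod.mk.injEq] at h
    exact ⟨h.1.1, h.2⟩
  mem t b := by
    rw [mem_stripSet2]
    cases b
    · exact Or.inl ⟨rfl, by show t + (ℓ - t) = ℓ; ring⟩
    · exact Or.inr ⟨rfl, by show t + (ℓ - 1 - t) = ℓ - 1; ring⟩
  surj v hv := by
    rw [mem_stripSet2] at hv
    rcases hv with ⟨hb, hsum⟩ | ⟨hb, hsum⟩
    · refine ⟨v.1.1, false, ?_⟩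
      have h2 : v.1.2 = ℓ - v.1.1 := by linear_combination hsum
      show v = ((v.1.1, ℓ - v.1.1), false)
      rw [← h2, ← hb]
    · refine ⟨v.1.1, true, ?_⟩
      have h2 : v.1.2 = ℓ - 1 - v.1.1 := by linear_combination hsum
      show v = ((v.1.1, ℓ - 1 - v.1.1), true)
      rw [← h2, ← hb]
  snd_eq t b := rfl
  adj0 t := Or.inl ⟨rfl, rfl, Or.inr (Or.inr (by
    show ((t : ZMod L), ℓ - 1 - t) = (t, (ℓ - t) - 1)
    rw [Prod.mk.injEq]
    exact ⟨rfl, by ring⟩))⟩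
  adj1 t := Or.inl ⟨rfl, rfl, Or.inr (Or.inl (by
    show ((t : ZMod L), ℓ - 1 - t) = ((t + 1) - 1, ℓ - (t + 1))
    rw [Prod.mk.injEq]
    exact ⟨by ring, by ring⟩))⟩
  classify t u h := by
    rcases h with ⟨-, -, h | h | h⟩ | ⟨hv, -, -⟩
    · simp only [Prod.mk.injEq, Bool.cond_true, Bool.cond_false] at h
      obtain ⟨h1, h2⟩ := h
      exact absurd (by linear_combination -h1 - h2 : (1 : ZMod L) = 0) (one_ne_zero_zmod hL)
    · simp only [Prod.mk.injEq, Bool.cond_true, Bool.cond_false] at h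
      refine Or.inr ?_
      rw [h.1]; ring
    · simp only [Prod.mk.injEq, Bool.cond_true, Bool.cond_false] at h
      exact Or.inl h.1
    · simp at hv

def mkStripCoord (hL : 8 ≤ L) (d : Fin 3) (ℓ : ZMod L) : StripCoord L d ℓ :=
  match d with
  | ⟨0, _⟩ => stripCoord0 hL ℓ
  | ⟨1, _⟩ => stripCoord1 hL ℓ
  | ⟨2, _⟩ => stripCoord2 hL ℓ

end StripAux

section GlueAux
set_option linter.unusedSectionVars false
set_option maxHeartbeats 1000000

variable {L q : ℕ} [NeZero L] [NeZero (2 * L)] {d : Fin 3} {ℓ : ZMod L}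

lemma fin3_cases (d : Fin 3) : d = 0 ∨ d = 1 ∨ d = 2 := by
  rcases d with ⟨dv, hlt⟩
  interval_cases dv
  · exact Or.inl rfl
  · exact Or.inr (Or.inl rfl)
  · exact Or.inr (Or.inr rfl)

lemma step_even (hL : 8 ≤ L) {k : ZMod (2 * L)} (hk : k.val % 2 = 0) :
    (k + 1).val = k.val + 1 := by
  haveI : Fact (1 < 2 * L) := ⟨by omega⟩
  have h1 : k.val < 2 * L := ZMod.val_lt k
  rw [ZMod.val_add, ZMod.val_one]
  exact Nat.mod_eq_of_lt (by omega)

lemma step_odd (hL : 8 ≤ L) {k : ZMod (2 * L)} (hk : k.val % 2 = 1) :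
    (k + 1).val % 2 = 0 ∧
    (((k + 1).val / 2 : ℕ) : ZMod L) = ((k.val / 2 : ℕ) : ZMod L) + 1 := by
  haveI : Fact (1 < 2 * L) := ⟨by omega⟩
  have h1 : k.val < 2 * L := ZMod.val_lt k
  have hv : (k + 1).val = (k.val + 1) % (2 * L) := by rw [ZMod.val_add, ZMod.val_one]
  have hb : k.val + 1 = 2 * (k.val / 2 + 1) := by omega
  have h2 : (k.val + 1) % (2 * L) = 2 * ((k.val / 2 + 1) % L) := by
    rw [hb, Nat.mul_mod_mul_left]
  constructor
  · rw [hv, h2]; omega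
  · rw [hv, h2]
    have h3 : 2 * ((k.val / 2 + 1) % L) / 2 = (k.val / 2 + 1) % L := by omega
    rw [h3]
    have e1 : (((k.val / 2 + 1) % L : ℕ) : ZMod L) = ((k.val / 2 + 1 : ℕ) : ZMod L) :=
      (ZMod.natCast_eq_natCast_iff _ _ _).mpr (Nat.mod_modEq _ _)
    rw [e1]; push_cast; ring

lemma cyc_snd (sc : StripCoord L d ℓ) (k : ZMod (2 * L)) :
    (stripCycle L d ℓ k).2 = decide (k.val % 2 = 1) := by
  rw [sc.cyc_eq]; exact sc.snd_eq _ _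

lemma cyc_mem (sc : StripCoord L d ℓ) (k : ZMod (2 * L)) :
    stripCycle L d ℓ k ∈ stripSet L d ℓ := by
  rw [sc.cyc_eq]; exact sc.mem _ _

lemma cyc_even_eq (sc : StripCoord L d ℓ) (hL : 8 ≤ L) {k : ZMod (2 * L)}
    (hk : k.val % 2 = 0) :
    stripCycle L d ℓ k = sc.coord ((k.val / 2 : ℕ) : ZMod L) false ∧
    stripCycle L d ℓ (k + 1) = sc.coord ((k.val / 2 : ℕ) : ZMod L) true := by
  have hne : ¬ (k.val % 2 = 1) := by omega
  constructor
  · rw [sc.cyc_eq]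
    simp [hne]
  · rw [sc.cyc_eq]
    have he := step_even hL hk
    have h2 : (k.val + 1) / 2 = k.val / 2 := by omega
    have h3 : (k.val + 1) % 2 = 1 := by omega
    rw [he, h2, h3]
    simp
lemma cyc_odd_eq (sc : StripCoord L d ℓ) (hL : 8 ≤ L) {k : ZMod (2 * L)}
    (hk : k.val % 2 = 1) :
    stripCycle L d ℓ k = sc.coord ((k.val / 2 : ℕ) : ZMod L) true ∧
    stripCycle L d ℓ (k + 1) = sc.coord (((k.val / 2 : ℕ) : ZMod L) + 1) false := by
  obtain ⟨h0, h1⟩ := step_odd hL hk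
  constructor
  · rw [sc.cyc_eq]; simp [hk]
  · rw [sc.cyc_eq, h1]
    have hne : ¬ ((k + 1).val % 2 = 1) := by omega
    simp [hne]

lemma cyc_inj (sc : StripCoord L d ℓ) {k k' : ZMod (2 * L)}
    (h : stripCycle L d ℓ k = stripCycle L d ℓ k') : k = k' := by
  rw [sc.cyc_eq, sc.cyc_eq] at h
  obtain ⟨ht, hb⟩ := sc.inj h
  have hk : k.val < 2 * L := ZMod.val_lt k
  have hk' : k'.val < 2 * L := ZMod.val_lt k'
  have h2 : k.val / 2 = k'.val / 2 := by
    have e1 : ((k.val / 2 : ℕ) : ZMod L).val = k.val / 2 := ZMod.val_cast_of_lt (by omega)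
    have e2 : ((k'.val / 2 : ℕ) : ZMod L).val = k'.val / 2 := ZMod.val_cast_of_lt (by omega)
    rw [← e1, ← e2, ht]
  have h3 : (k.val % 2 = 1) ↔ (k'.val % 2 = 1) := decide_eq_decide.mp hb
  have h4 : k.val % 2 = k'.val % 2 := by
    by_cases hh : k.val % 2 = 1
    · rw [hh, h3.mp hh]
    · have hh' := mt h3.mpr hh
      omega
  have h5 : k.val = k'.val := by omega
  have h6 := congrArg (Nat.cast : ℕ → ZMod (2 * L)) h5
  rwa [ZMod.natCast_val, ZMod.natCast_val, ZMod.cast_id, ZMod.cast_id] at h6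

lemma cyc_surj (sc : StripCoord L d ℓ) {v : Site L} (hv : v ∈ stripSet L d ℓ) :
    ∃ k : ZMod (2 * L), stripCycle L d ℓ k = v := by
  obtain ⟨t, b, rfl⟩ := sc.surj v hv
  refine ⟨((2 * t.val + (if b then 1 else 0) : ℕ) : ZMod (2 * L)), ?_⟩
  have htL : t.val < L := ZMod.val_lt t
  have hlt : 2 * t.val + (if b then 1 else 0) < 2 * L := by
    cases b <;> simp <;> omega
  have hval : (((2 * t.val + (if b then 1 else 0) : ℕ) : ZMod (2 * L))).val
      = 2 * t.val + (if b then 1 else 0) := ZMod.val_cast_of_lt hlt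
  rw [sc.cyc_eq, hval]
  have hdiv : (2 * t.val + (if b then 1 else 0)) / 2 = t.val := by
    cases b <;> simp <;> omega
  have hmod : (2 * t.val + (if b then 1 else 0)) % 2 = (if b then 1 else 0) := by
    cases b <;> simp <;> omega
  rw [hdiv, hmod, ZMod.natCast_val, ZMod.cast_id]
  congr 1
  cases b
  · simp
  · simp

lemma stripEnergy_card (σ : Conf L q) (d : Fin 3) (ℓ : ZMod L) :
    stripEnergy L q σ d ℓ = (Finset.univ.filter fun e : Site L × Site L =>
      e.1.2 = false ∧ e.1 ∈ stripSet L d ℓ ∧ e.2 ∈ stripSet L d ℓ ∧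
        hexAdj e.1 e.2 ∧ σ e.1 ≠ σ e.2).card := by
  rw [stripEnergy, Nat.card_eq_fintype_card, Fintype.card_subtype]

lemma ham_card (σ : Conf L q) :
    Ham L q σ = (Finset.univ.filter fun e : Site L × Site L =>
      e.1.2 = false ∧ hexAdj e.1 e.2 ∧ σ e.1 ≠ σ e.2).card := by
  rw [Ham, Nat.card_eq_fintype_card, Fintype.card_subtype]

lemma bridge_count_card (σ : Conf L q) :
    Nat.card {p : Fin 3 × ZMod L // IsBridge L q σ p.1 p.2}
      = (Finset.univ.filter fun p : Fin 3 × ZMod L => IsBridge L q σ p.1 p.2).card := by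
  rw [Nat.card_eq_fintype_card, Fintype.card_subtype]

lemma two_ne_zero_zmod2L (hL : 8 ≤ L) : (2 : ZMod (2 * L)) ≠ 0 := by
  intro h
  have h0 : ((2 : ℕ) : ZMod (2 * L)) = 0 := by exact_mod_cast h
  rw [ZMod.natCast_eq_zero_iff] at h0
  have := Nat.le_of_dvd (by omega) h0
  omega

lemma stripEnergy_eq_changes (sc : StripCoord L d ℓ) (hL : 8 ≤ L) (σ : Conf L q) :
    stripEnergy L q σ d ℓ = (Finset.univ.filter fun k : ZMod (2 * L) =>
      σ (stripCycle L d ℓ (k + 1)) ≠ σ (stripCycle L d ℓ k)).card := by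
  rw [stripEnergy_card]
  refine (Finset.card_bij
    (fun k _ => if k.val % 2 = 0
      then (stripCycle L d ℓ k, stripCycle L d ℓ (k + 1))
      else (stripCycle L d ℓ (k + 1), stripCycle L d ℓ k)) ?_ ?_ ?_).symm
  · -- membership
    intro k hk
    rw [Finset.mem_filter] at hk ⊢
    refine ⟨Finset.mem_univ _, ?_⟩
    by_cases hpar : k.val % 2 = 0
    · obtain ⟨he1, he2⟩ := cyc_even_eq sc hL hpar
      rw [if_pos hpar]
      refine ⟨by rw [he1]; exact sc.snd_eq _ _, cyc_mem sc _, cyc_mem sc _, ?_, ?_⟩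
      · rw [he1, he2]; exact sc.adj0 _
      · exact (hk.2).symm
    · have hodd : k.val % 2 = 1 := by omega
      obtain ⟨he1, he2⟩ := cyc_odd_eq sc hL hodd
      rw [if_neg hpar]
      refine ⟨by rw [he2]; exact sc.snd_eq _ _, cyc_mem sc _, cyc_mem sc _, ?_, ?_⟩
      · rw [he1, he2]; exact sc.adj1 _
      · exact hk.2
  · -- injectivity
    intro k hk k' hk' he
    by_cases h1 : k.val % 2 = 0 <;> by_cases h2 : k'.val % 2 = 0
    · rw [if_pos h1, if_pos h2, Prod.mk.injEq] at he
      exact cyc_inj sc he.1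
    · rw [if_pos h1, if_neg h2, Prod.mk.injEq] at he
      have e1 : k = k' + 1 := cyc_inj sc he.1
      have e2 : k + 1 = k' := cyc_inj sc he.2
      exfalso
      apply two_ne_zero_zmod2L hL
      linear_combination e2 - e1
    · rw [if_neg h1, if_pos h2, Prod.mk.injEq] at he
      have e1 : k + 1 = k' := cyc_inj sc he.1
      have e2 : k = k' + 1 := cyc_inj sc he.2
      exfalso
      apply two_ne_zero_zmod2L hL
      linear_combination e1 - e2
    · rw [if_neg h1, if_neg h2, Prod.mk.injEq] at he
      exact cyc_inj sc he.2
  · -- surjectivity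
    intro e he
    rw [Finset.mem_filter] at he
    obtain ⟨-, hfst, hs1, hs2, hadj, hsig⟩ := he
    obtain ⟨k1, hk1⟩ := cyc_surj sc hs1
    obtain ⟨k2, hk2⟩ := cyc_surj sc hs2
    have hpar1 : k1.val % 2 = 0 := by
      have := cyc_snd sc k1
      rw [hk1, hfst] at this
      have h' : ¬ (k1.val % 2 = 1) := by
        intro hh; rw [hh] at this; simp at this
      omega
    have hsnd : e.2.2 = true := by
      rcases hadj with ⟨-, h, -⟩ | ⟨h, -, -⟩
      · exact h
      · rw [hfst] at h; exact absurd h (by simp)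
    have hpar2 : k2.val % 2 = 1 := by
      have := cyc_snd sc k2
      rw [hk2, hsnd] at this
      by_contra hh
      rw [show k2.val % 2 = 0 by omega] at this
      simp at this
    obtain ⟨hc1, hc1'⟩ := cyc_even_eq sc hL hpar1
    obtain ⟨hc2, hc2'⟩ := cyc_odd_eq sc hL hpar2
    have hadj' : hexAdj (sc.coord ((k1.val / 2 : ℕ) : ZMod L) false)
        (sc.coord ((k2.val / 2 : ℕ) : ZMod L) true) := by
      rw [← hc1, ← hc2, hk1, hk2]; exact hadj
    rcases sc.classify _ _ hadj' with hcase | hcase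
    · -- k2 = k1 + 1
      have hk2eq : k2 = k1 + 1 := by
        apply cyc_inj sc
        rw [hc2, hc1', hcase]
      refine ⟨k1, ?_, ?_⟩
      · rw [Finset.mem_filter]
        refine ⟨Finset.mem_univ _, ?_⟩
        rw [← hk2eq, hk1, hk2]
        exact hsig.symm
      · rw [if_pos hpar1, ← hk2eq, hk1, hk2]
    · -- k1 = k2 + 1
      have hk1eq : k2 + 1 = k1 := by
        apply cyc_inj sc
        rw [hc2', hc1, hcase]
      refine ⟨k2, ?_, ?_⟩
      · rw [Finset.mem_filter]
        refine ⟨Finset.mem_univ _, ?_⟩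
        rw [hk1eq, hk1, hk2]
        exact hsig
      · rw [if_neg (by omega : ¬ (k2.val % 2 = 0)), hk1eq, hk1, hk2]

lemma bridge_iff_cyc_const (sc : StripCoord L d ℓ) (σ : Conf L q) :
    IsBridge L q σ d ℓ ↔
      ∀ k k' : ZMod (2 * L), σ (stripCycle L d ℓ k) = σ (stripCycle L d ℓ k') := by
  constructor
  · rintro ⟨a, ha⟩ k k'
    rw [ha _ (cyc_mem sc k), ha _ (cyc_mem sc k')]
  · intro h
    refine ⟨σ (stripCycle L d ℓ 0), fun v hv => ?_⟩
    obtain ⟨k, rfl⟩ := cyc_surj sc hv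
    exact h k 0

lemma two_le_energy (sc : StripCoord L d ℓ) (hL : 8 ≤ L) (σ : Conf L q)
    (hnb : ¬ IsBridge L q σ d ℓ) : 2 ≤ stripEnergy L q σ d ℓ := by
  rw [stripEnergy_eq_changes sc hL]
  rw [bridge_iff_cyc_const sc] at hnb
  push_neg at hnb
  exact two_le_changes (fun k : ZMod (2 * L) => σ (stripCycle L d ℓ k)) hnb

lemma semibridge_of_two (sc : StripCoord L d ℓ) (hL : 8 ≤ L) (σ : Conf L q)
    (h2 : stripEnergy L q σ d ℓ = 2) : IsSemibridge L q σ d ℓ := by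
  rw [stripEnergy_eq_changes sc hL] at h2
  obtain ⟨a, b, s, m, hab, hm0, hmn, hcov, hsa, hsb⟩ :=
    changes_eq_two (fun k => σ (stripCycle L d ℓ k)) h2
  have harc : ∀ (c : Fin q), {v ∈ stripSet L d ℓ | σ v = c}
      = stripCycle L d ℓ '' {k | σ (stripCycle L d ℓ k) = c} := by
    intro c
    ext v
    simp only [Set.mem_setOf_eq, Set.mem_image]
    constructor
    · rintro ⟨hv, hvc⟩
      obtain ⟨k, rfl⟩ := cyc_surj sc hv
      exact ⟨k, hvc, rfl⟩
    · rintro ⟨k, hk, rfl⟩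
      exact ⟨cyc_mem sc k, hk⟩
  refine ⟨a, b, hab, ?_, ?_, ?_, ?_, ?_⟩
  · intro v hv
    obtain ⟨k, rfl⟩ := cyc_surj sc hv
    exact hcov k
  · refine ⟨stripCycle L d ℓ s, cyc_mem sc s, ?_⟩
    have : s ∈ {k : ZMod (2 * L) | σ (stripCycle L d ℓ k) = a} := by
      rw [hsa]
      exact ⟨0, hm0, by simp⟩
    exact this
  · refine ⟨stripCycle L d ℓ (s + (m : ZMod (2 * L))), cyc_mem sc _, ?_⟩
    have : s + (m : ZMod (2 * L)) ∈ {k : ZMod (2 * L) | σ (stripCycle L d ℓ k) = b} := by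
      rw [hsb]
      exact ⟨0, Set.mem_Iio.mpr (by omega), by simp⟩
    exact this
  · exact ⟨s, m, by rw [harc a, hsa, Set.image_image]⟩
  · exact ⟨s + (m : ZMod (2 * L)), 2 * L - m, by rw [harc b, hsb, Set.image_image]⟩

lemma strip_pair_card (hL : 8 ≤ L) (v w : Site L) (hv : v.2 = false)
    (hadj : hexAdj v w) :
    (Finset.univ.filter fun p : Fin 3 × ZMod L =>
      v ∈ stripSet L p.1 p.2 ∧ w ∈ stripSet L p.1 p.2).card = 2 := by
  have hone := one_ne_zero_zmod hL
  rcases hadj with ⟨-, hw, hopt⟩ | ⟨h, -, -⟩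
  swap
  · rw [hv] at h; exact absurd h (by simp)
  have hvmem : ∀ l : ZMod L, v ∈ stripSet L 2 l ↔ v.1.1 + v.1.2 = l := by
    intro l
    rw [mem_stripSet2]
    constructor
    · rintro (⟨-, h⟩ | ⟨hb, -⟩)
      · exact h
      · rw [hv] at hb; exact absurd hb (by simp)
    · intro h; exact Or.inl ⟨hv, h⟩
  have hwmem : ∀ l : ZMod L, w ∈ stripSet L 2 l ↔ w.1.1 + w.1.2 = l - 1 := by
    intro l
    rw [mem_stripSet2]
    constructor
    · rintro (⟨hb, -⟩ | ⟨-, h⟩)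
      · rw [hw] at hb; exact absurd hb (by simp)
      · exact h
    · intro h; exact Or.inr ⟨hw, h⟩
  rcases hopt with hcase | hcase | hcase
  · -- w.1 = v.1
    have hw1 : w.1.1 = v.1.1 := by rw [hcase]
    have hw2 : w.1.2 = v.1.2 := by rw [hcase]
    have hset : (Finset.univ.filter fun p : Fin 3 × ZMod L =>
        v ∈ stripSet L p.1 p.2 ∧ w ∈ stripSet L p.1 p.2)
        = {((0 : Fin 3), v.1.2), ((1 : Fin 3), v.1.1)} := by
      ext ⟨d, l⟩
      simp only [Finset.mem_filter, Finset.mem_univ, true_and, Finset.mem_insert,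
        Finset.mem_singleton, Prod.mk.injEq]
      rcases fin3_cases d with rfl | rfl | rfl
      · rw [mem_stripSet0, mem_stripSet0, hw2]
        constructor
        · rintro ⟨h1, -⟩; exact Or.inl ⟨rfl, h1.symm⟩
        · rintro (⟨-, h1⟩ | ⟨h1, -⟩)
          · exact ⟨h1.symm, h1.symm⟩
          · exact absurd h1 (by decide)
      · rw [mem_stripSet1, mem_stripSet1, hw1]
        constructor
        · rintro ⟨h1, -⟩; exact Or.inr ⟨rfl, h1.symm⟩
        · rintro (⟨h1, -⟩ | ⟨-, h1⟩)
          · exact absurd h1 (by decide)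
          · exact ⟨h1.symm, h1.symm⟩
      · rw [hvmem, hwmem, hw1, hw2]
        constructor
        · rintro ⟨h1, h2⟩
          exact absurd (by linear_combination h2 - h1 : (1 : ZMod L) = 0) hone
        · rintro (⟨h1, -⟩ | ⟨h1, -⟩) <;> exact absurd h1 (by decide)
    rw [hset, Finset.card_insert_of_notMem (by simp), Finset.card_singleton]
  · -- w.1 = (v.1.1 - 1, v.1.2)
    have hw1 : w.1.1 = v.1.1 - 1 := by rw [hcase]
    have hw2 : w.1.2 = v.1.2 := by rw [hcase]
    have hset : (Finset.univ.filter fun p : Fin 3 × ZMod L =>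
        v ∈ stripSet L p.1 p.2 ∧ w ∈ stripSet L p.1 p.2)
        = {((0 : Fin 3), v.1.2), ((2 : Fin 3), v.1.1 + v.1.2)} := by
      ext ⟨d, l⟩
      simp only [Finset.mem_filter, Finset.mem_univ, true_and, Finset.mem_insert,
        Finset.mem_singleton, Prod.mk.injEq]
      rcases fin3_cases d with rfl | rfl | rfl
      · rw [mem_stripSet0, mem_stripSet0, hw2]
        constructor
        · rintro ⟨h1, -⟩; exact Or.inl ⟨rfl, h1.symm⟩
        · rintro (⟨-, h1⟩ | ⟨h1, -⟩)
          · exact ⟨h1.symm, h1.symm⟩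
          · exact absurd h1 (by decide)
      · rw [mem_stripSet1, mem_stripSet1, hw1]
        constructor
        · rintro ⟨h1, h2⟩
          exact absurd (by linear_combination h1 - h2 : (1 : ZMod L) = 0) hone
        · rintro (⟨h1, -⟩ | ⟨h1, -⟩) <;> exact absurd h1 (by decide)
      · rw [hvmem, hwmem, hw1, hw2]
        constructor
        · rintro ⟨h1, -⟩; exact Or.inr ⟨rfl, h1.symm⟩
        · rintro (⟨h1, -⟩ | ⟨-, h1⟩)
          · exact absurd h1 (by decide)
          · exact ⟨h1.symm, by linear_combination -h1⟩
    rw [hset, Finset.card_insert_of_notMem (by simp), Finset.card_singleton]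
  · -- w.1 = (v.1.1, v.1.2 - 1)
    have hw1 : w.1.1 = v.1.1 := by rw [hcase]
    have hw2 : w.1.2 = v.1.2 - 1 := by rw [hcase]
    have hset : (Finset.univ.filter fun p : Fin 3 × ZMod L =>
        v ∈ stripSet L p.1 p.2 ∧ w ∈ stripSet L p.1 p.2)
        = {((1 : Fin 3), v.1.1), ((2 : Fin 3), v.1.1 + v.1.2)} := by
      ext ⟨d, l⟩
      simp only [Finset.mem_filter, Finset.mem_univ, true_and, Finset.mem_insert,
        Finset.mem_singleton, Prod.mk.injEq]
      rcases fin3_cases d with rfl | rfl | rfl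
      · rw [mem_stripSet0, mem_stripSet0, hw2]
        constructor
        · rintro ⟨h1, h2⟩
          exact absurd (by linear_combination h1 - h2 : (1 : ZMod L) = 0) hone
        · rintro (⟨h1, -⟩ | ⟨h1, -⟩) <;> exact absurd h1 (by decide)
      · rw [mem_stripSet1, mem_stripSet1, hw1]
        constructor
        · rintro ⟨h1, -⟩; exact Or.inl ⟨rfl, h1.symm⟩
        · rintro (⟨-, h1⟩ | ⟨h1, -⟩)
          · exact ⟨h1.symm, h1.symm⟩
          · exact absurd h1 (by decide)
      · rw [hvmem, hwmem, hw1, hw2]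
        constructor
        · rintro ⟨h1, -⟩; exact Or.inr ⟨rfl, h1.symm⟩
        · rintro (⟨h1, -⟩ | ⟨-, h1⟩)
          · exact absurd h1 (by decide)
          · exact ⟨h1.symm, by linear_combination -h1⟩
    rw [hset, Finset.card_insert_of_notMem (by simp), Finset.card_singleton]

lemma sum_stripEnergy (hL : 8 ≤ L) (σ : Conf L q) :
    ∑ p : Fin 3 × ZMod L, stripEnergy L q σ p.1 p.2 = 2 * Ham L q σ := by
  have h1 : ∑ p : Fin 3 × ZMod L, stripEnergy L q σ p.1 p.2
      = ∑ p : Fin 3 × ZMod L, ∑ e : Site L × Site L,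
          if (e.1.2 = false ∧ e.1 ∈ stripSet L p.1 p.2 ∧ e.2 ∈ stripSet L p.1 p.2 ∧
              hexAdj e.1 e.2 ∧ σ e.1 ≠ σ e.2) then 1 else 0 := by
    refine Finset.sum_congr rfl fun p _ => ?_
    rw [stripEnergy_card, Finset.card_filter]
  rw [h1, Finset.sum_comm]
  have h2 : ∀ e : Site L × Site L,
      (∑ p : Fin 3 × ZMod L,
        if (e.1.2 = false ∧ e.1 ∈ stripSet L p.1 p.2 ∧ e.2 ∈ stripSet L p.1 p.2 ∧
            hexAdj e.1 e.2 ∧ σ e.1 ≠ σ e.2) then 1 else 0)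
      = if (e.1.2 = false ∧ hexAdj e.1 e.2 ∧ σ e.1 ≠ σ e.2) then 2 else 0 := by
    intro e
    by_cases hP : e.1.2 = false ∧ hexAdj e.1 e.2 ∧ σ e.1 ≠ σ e.2
    · rw [if_pos hP]
      obtain ⟨hP1, hP2, hP3⟩ := hP
      have := strip_pair_card hL e.1 e.2 hP1 hP2
      rw [← this, Finset.card_filter]
      refine Finset.sum_congr rfl fun p _ => ?_
      congr 1
      simp only [eq_iff_iff]
      constructor
      · rintro ⟨-, hm1, hm2, -, -⟩; exact ⟨hm1, hm2⟩
      · rintro ⟨hm1, hm2⟩; exact ⟨hP1, hm1, hm2, hP2, hP3⟩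
    · rw [if_neg hP]
      refine Finset.sum_eq_zero fun p _ => ?_
      rw [if_neg]
      rintro ⟨ha, -, -, hb, hc⟩
      exact hP ⟨ha, hb, hc⟩
  rw [Finset.sum_congr rfl fun e _ => h2 e]
  rw [ham_card, Finset.card_filter, Finset.mul_sum]
  refine Finset.sum_congr rfl fun e _ => ?_
  by_cases hP : e.1.2 = false ∧ hexAdj e.1 e.2 ∧ σ e.1 ≠ σ e.2
  · rw [if_pos hP, if_pos hP]
    omega
  · rw [if_neg hP, if_neg hP]
    omega


end GlueAux

/-- Lemma 5.3 (hexagonal lattice): every configuration `σ` has at least `3L - H(σ)`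
bridges, and if it has exactly `3L - H(σ)` bridges then every strip is either
a bridge or a semibridge. -/
theorem bridge_count_lower (L q : ℕ) (hL : 8 ≤ L) (hq : 2 ≤ q) (σ : Conf L q) :
    3 * L ≤ Ham L q σ + Nat.card {p : Fin 3 × ZMod L // IsBridge L q σ p.1 p.2} ∧
    ((Nat.card {p : Fin 3 × ZMod L // IsBridge L q σ p.1 p.2} : ℤ) =
        3 * L - (Ham L q σ : ℤ) →
      ∀ (d : Fin 3) (ℓ : ZMod L), IsBridge L q σ d ℓ ∨ IsSemibridge L q σ d ℓ) := by

  haveI : NeZero L := ⟨by omega⟩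
  haveI : NeZero (2 * L) := ⟨by omega⟩
  classical
  set B : ℕ :=
    (Finset.univ.filter fun p : Fin 3 × ZMod L => IsBridge L q σ p.1 p.2).card with hB
  have hBcard : Nat.card {p : Fin 3 × ZMod L // IsBridge L q σ p.1 p.2} = B :=
    bridge_count_card σ
  have hsumE : ∑ p : Fin 3 × ZMod L, stripEnergy L q σ p.1 p.2 = 2 * Ham L q σ :=
    sum_stripEnergy hL σ
  have hcardU : (Finset.univ : Finset (Fin 3 × ZMod L)).card = 3 * L := by
    rw [Finset.card_univ]
    simp [ZMod.card]
  have hpoint : ∀ p : Fin 3 × ZMod L,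
      2 ≤ stripEnergy L q σ p.1 p.2 + (if IsBridge L q σ p.1 p.2 then 2 else 0) := by
    intro p
    by_cases hb : IsBridge L q σ p.1 p.2
    · rw [if_pos hb]; omega
    · rw [if_neg hb]
      have := two_le_energy (mkStripCoord hL p.1 p.2) hL σ hb
      omega
  have hindsum : ∑ p : Fin 3 × ZMod L,
      (if IsBridge L q σ p.1 p.2 then 2 else 0) = 2 * B := by
    rw [hB, Finset.card_filter, Finset.mul_sum]
    refine Finset.sum_congr rfl fun p _ => ?_
    by_cases hb : IsBridge L q σ p.1 p.2
    · rw [if_pos hb, if_pos hb]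
      omega
    · rw [if_neg hb, if_neg hb]
      omega
  have htot : ∑ p : Fin 3 × ZMod L,
      (stripEnergy L q σ p.1 p.2 + (if IsBridge L q σ p.1 p.2 then 2 else 0))
      = 2 * Ham L q σ + 2 * B := by
    rw [Finset.sum_add_distrib, hsumE, hindsum]
  have hge : 2 * (3 * L) ≤ 2 * Ham L q σ + 2 * B := by
    calc 2 * (3 * L) = ∑ _p : Fin 3 × ZMod L, 2 := by
          rw [Finset.sum_const, hcardU, smul_eq_mul]; ring
      _ ≤ _ := by
          rw [← htot]
          exact Finset.sum_le_sum fun p _ => hpoint p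
  constructor
  · rw [hBcard]; omega
  · intro hEq d ℓ
    rw [hBcard] at hEq
    have hHB : Ham L q σ + B = 3 * L := by omega
    have hsum_eq : ∑ _p : Fin 3 × ZMod L, 2 = ∑ p : Fin 3 × ZMod L,
        (stripEnergy L q σ p.1 p.2 + (if IsBridge L q σ p.1 p.2 then 2 else 0)) := by
      rw [htot, Finset.sum_const, hcardU, smul_eq_mul]
      omega
    have hall := (Finset.sum_eq_sum_iff_of_le (fun p _ => hpoint p)).mp hsum_eq
    by_cases hb : IsBridge L q σ d ℓ
    · exact Or.inl hb
    · refine Or.inr ?_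
      have hp := hall (d, ℓ) (Finset.mem_univ _)
      dsimp only at hp
      rw [if_neg hb] at hp
      exact semibridge_of_two (mkStripCoord hL d ℓ) hL σ (by omega)


end IsingHex
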